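/- For all real x > 0, ψ'(x+1) < e^{1/(x+1)} − 1, where ψ' is the trigamma function. -/

import Mathlib

open Real

noncomputable def digamma (x : ℝ) : ℝ := deriv (fun t : ℝ => Real.log (Real.Gamma t)) x

noncomputable def trigamma (x : ℝ) : ℝ := ∑' n : ℕ, 1 / (x + n) ^ 2

lemma key_ineq (t : ℝ) (ht : 1 ≤ t) :
    1 / t ^ 2 < Real.exp (1 / t) - Real.exp (1 / (t + 1)) := by
  have ht0 : (0:ℝ) < t := by linarith
  have ht1 : (0:ℝ) < t + 1 := by linarith
  set s : ℝ := 1 / (t + 1) with hs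
  set d : ℝ := 1 / (t * (t + 1)) with hd
  have hs0 : 0 ≤ s := by positivity
  have hd0 : 0 ≤ d := by positivity
  have hsd : 1 / t = s + d := by
    rw [hs, hd, div_add_div _ _ (by positivity) (by positivity),
      div_eq_div_iff (by positivity) (by positivity)]
    ring
  have hA : 1 + s + s ^ 2 / 2 + s ^ 3 / 6 ≤ Real.exp s := by
    have := Real.sum_le_exp_of_nonneg hs0 4
    simp [Finset.sum_range_succ, Nat.factorial] at this
    linarith
  have hB : 1 + d + d ^ 2 / 2 ≤ Real.exp d := by
    have := Real.sum_le_exp_of_nonneg hd0 3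
    simp [Finset.sum_range_succ, Nat.factorial] at this
    linarith
  have hAexp : (0:ℝ) < 1 + s + s ^ 2 / 2 + s ^ 3 / 6 := by positivity
  have hsplit : Real.exp (1 / t) - Real.exp s = Real.exp s * (Real.exp d - 1) := by
    rw [hsd, Real.exp_add]
    ring
  have hmul : (1 + s + s ^ 2 / 2 + s ^ 3 / 6) * (d + d ^ 2 / 2)
      ≤ Real.exp s * (Real.exp d - 1) := by
    have h1 : (0:ℝ) ≤ d + d ^ 2 / 2 := by positivity
    have h2 : d + d ^ 2 / 2 ≤ Real.exp d - 1 := by linarith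
    exact mul_le_mul hA h2 h1 (Real.exp_pos s).le
  have hpoly : (1 + s + s ^ 2 / 2 + s ^ 3 / 6) * (d + d ^ 2 / 2) - 1 / t ^ 2
      = (2 * t ^ 2 + 5 * t + 4) / (12 * t ^ 2 * (t + 1) ^ 5) := by
    rw [hs, hd]
    field_simp
    ring
  have hpos : (0:ℝ) < (2 * t ^ 2 + 5 * t + 4) / (12 * t ^ 2 * (t + 1) ^ 5) := by
    positivity
  rw [hsplit]
  linarith

theorem stmt_19 (x : ℝ) (hx : 0 < x) :
    trigamma (x + 1) < Real.exp (1/(x+1)) - 1 := by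
  have hx1 : (1:ℝ) ≤ x + 1 := by linarith
  -- telescoping sum
  have hf : ∀ n : ℕ, (1:ℝ) ≤ x + 1 + n := fun n => by
    have : (0:ℝ) ≤ n := Nat.cast_nonneg n
    linarith
  have hg : HasSum (fun n : ℕ => Real.exp (1 / (x + 1 + n)) - Real.exp (1 / (x + 1 + (n + 1))))
      (Real.exp (1 / (x + 1)) - 1) := by
    rw [hasSum_iff_tendsto_nat_of_nonneg]
    · have hsum : ∀ n : ℕ, ∑ i ∈ Finset.range n,
          (Real.exp (1 / (x + 1 + i)) - Real.exp (1 / (x + 1 + (i + 1))))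
          = Real.exp (1 / (x + 1)) - Real.exp (1 / (x + 1 + n)) := by
        intro n
        induction n with
        | zero => simp
        | succ k ih =>
            rw [Finset.sum_range_succ, ih]
            push_cast
            ring
      simp only [hsum]
      have h1 : Filter.Tendsto (fun n : ℕ => Real.exp (1 / (x + 1 + n))) Filter.atTop
          (nhds (Real.exp 0)) := by
        apply Filter.Tendsto.comp Real.continuous_exp.continuousAt.tendsto
        have : Filter.Tendsto (fun n : ℕ => x + 1 + (n:ℝ)) Filter.atTop Filter.atTop :=
          Filter.tendsto_atTop_add_const_left _ _ tendsto_natCast_atTop_atTop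
        simpa [Pi.inv_def] using this.inv_tendsto_atTop
      rw [Real.exp_zero] at h1
      simpa using Filter.Tendsto.const_sub (Real.exp (1 / (x + 1))) h1
    · intro n
      have h := key_ineq (x + 1 + n) (hf n)
      have hpos : (0:ℝ) < 1 / (x + 1 + n) ^ 2 := by positivity
      have : x + 1 + n + 1 = x + 1 + ((n:ℝ) + 1) := by ring
      rw [← this]
      linarith [key_ineq (x + 1 + n) (hf n)]
  have hlt : ∑' n : ℕ, 1 / (x + 1 + n) ^ 2
      < ∑' n : ℕ, (Real.exp (1 / (x + 1 + n)) - Real.exp (1 / (x + 1 + (n + 1)))) := by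
    apply Summable.tsum_lt_tsum_of_nonneg (i := 0)
    · intro b; positivity
    · intro b
      have h := key_ineq (x + 1 + b) (hf b)
      have : x + 1 + b + 1 = x + 1 + ((b:ℝ) + 1) := by ring
      rw [← this]
      linarith
    · simpa using key_ineq (x + 1) hx1
    · exact hg.summable
  calc trigamma (x + 1) = ∑' n : ℕ, 1 / (x + 1 + n) ^ 2 := rfl
    _ < ∑' n : ℕ, (Real.exp (1 / (x + 1 + n)) - Real.exp (1 / (x + 1 + (n + 1)))) := hlt
    _ = Real.exp (1 / (x + 1)) - 1 := hg.tsum_eq
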